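/- arXiv:1908.05654 — 2 statements merged into one kernel-verified Lean document; each statement's English description precedes it below -/
import Mathlib

section
/- The Neumann heat kernel satisfies the Chapman–Kolmogorov equation: for all s, t > 0 and all x, y ∈ [0,1], ∫_0^1 p(s,x,z) p(t,z,y) dz = p(s+t,x,y). -/
open MeasureTheory Real
open scoped ENNReal

/-- Centered Gaussian density with variance `t`. -/
noncomputable def gaussD (t x : ℝ) : ℝ :=
  (2 * Real.pi * t) ^ (-(1:ℝ)/2) * Real.exp (-x ^ 2 / (2 * t))

lemma gaussD_nonneg {t : ℝ} (ht : 0 < t) (x : ℝ) : 0 ≤ gaussD t x := by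
  unfold gaussD; positivity

lemma gaussD_neg (t x : ℝ) : gaussD t (-x) = gaussD t x := by
  simp [gaussD, neg_pow]

lemma continuous_gaussD (t : ℝ) : Continuous (gaussD t) := by
  unfold gaussD; fun_prop

lemma summable_gauss_nat {t : ℝ} (ht : 0 < t) (b : ℝ) :
    Summable fun n : ℕ => Real.exp (-(b + 2*n)^2 / (2*t)) := by
  refine summable_of_isBigO_nat Real.summable_exp_neg_nat ?_
  rw [Asymptotics.isBigO_iff]
  refine ⟨1, ?_⟩
  filter_upwards [Filter.eventually_ge_atTop ⌈max |b| (2*t)⌉₊] with n hn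
  have hmax : max |b| (2*t) ≤ n := le_trans (Nat.le_ceil _) (by exact_mod_cast hn)
  have hb : |b| ≤ n := le_trans (le_max_left _ _) hmax
  have ht2 : 2*t ≤ n := le_trans (le_max_right _ _) hmax
  have hb' : -(n:ℝ) ≤ b := by have := neg_abs_le b; linarith
  rw [Real.norm_eq_abs, Real.norm_eq_abs, abs_of_pos (Real.exp_pos _),
    abs_of_pos (Real.exp_pos _), one_mul, Real.exp_le_exp]
  rw [div_le_iff₀ (by positivity)]
  have h1 : (n:ℝ) ≤ b + 2*n := by linarith
  have h0 : (0:ℝ) ≤ n := Nat.cast_nonneg n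
  nlinarith [sq_nonneg (b + 2*n - n)]

lemma summable_gauss_int {t : ℝ} (ht : 0 < t) (b : ℝ) :
    Summable fun n : ℤ => gaussD t (b + 2*(n:ℝ)) := by
  have h : ∀ n : ℤ, gaussD t (b + 2*(n:ℝ)) =
      (2 * Real.pi * t) ^ (-(1:ℝ)/2) * Real.exp (-(b + 2*(n:ℝ))^2 / (2*t)) := fun n => rfl
  simp_rw [h]
  apply Summable.mul_left
  apply Summable.of_nat_of_neg
  · exact (summable_gauss_nat ht b).congr (fun n => by norm_num)
  · refine (summable_gauss_nat ht (-b)).congr (fun n => ?_)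
    push_cast
    congr 1
    ring


/-- The Neumann heat kernel on `[0,1]` (transition density of reflected BM). -/
noncomputable def heatK (t x y : ℝ) : ℝ :=
  ∑' n : ℤ, (gaussD t (x - y + 2 * (n : ℝ)) + gaussD t (x + y + 2 * (n : ℝ)))

lemma summable_heatK {t : ℝ} (ht : 0 < t) (x y : ℝ) :
    Summable fun n : ℤ => gaussD t (x - y + 2 * (n:ℝ)) + gaussD t (x + y + 2 * (n:ℝ)) :=
  (summable_gauss_int ht (x - y)).add (summable_gauss_int ht (x + y))

lemma heatK_nonneg {t : ℝ} (ht : 0 < t) (x y : ℝ) : 0 ≤ heatK t x y :=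
  tsum_nonneg fun n => add_nonneg (gaussD_nonneg ht _) (gaussD_nonneg ht _)

noncomputable def Q (t a : ℝ) : ℝ≥0∞ := ENNReal.ofReal (gaussD t a)

noncomputable def K (t x y : ℝ) : ℝ≥0∞ :=
  ∑' n : ℤ, (Q t (x - y + 2 * (n:ℝ)) + Q t (x + y + 2 * (n:ℝ)))

lemma Q_neg (t a : ℝ) : Q t (-a) = Q t a := by rw [Q, gaussD_neg, Q]

lemma ofReal_heatK {t : ℝ} (ht : 0 < t) (x y : ℝ) :
    ENNReal.ofReal (heatK t x y) = K t x y := by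
  rw [heatK, ENNReal.ofReal_tsum_of_nonneg
    (fun n => add_nonneg (gaussD_nonneg ht _) (gaussD_nonneg ht _)) (summable_heatK ht x y)]
  exact tsum_congr fun n => ENNReal.ofReal_add (gaussD_nonneg ht _) (gaussD_nonneg ht _)

lemma K_lt_top {t : ℝ} (ht : 0 < t) (x y : ℝ) : K t x y < ⊤ := by
  rw [← ofReal_heatK ht]; exact ENNReal.ofReal_lt_top

lemma K_shift (t x y : ℝ) (k : ℤ) : K t (x + 2*(k:ℝ)) y = K t x y := by
  have := (Equiv.addRight k).tsum_eq
    (fun n : ℤ => Q t (x - y + 2 * (n:ℝ)) + Q t (x + y + 2 * (n:ℝ)))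
  rw [K, K, ← this]
  refine tsum_congr fun n => ?_
  simp only [Equiv.coe_addRight]
  push_cast
  ring_nf

lemma K_even (t x y : ℝ) : K t (-x) y = K t x y := by
  have h1 : ∀ n : ℤ, Q t (-x - y + 2 * (n:ℝ)) + Q t (-x + y + 2 * (n:ℝ))
      = Q t (x + y + 2 * ((-n : ℤ):ℝ)) + Q t (x - y + 2 * ((-n : ℤ):ℝ)) := by
    intro n
    rw [show -x - y + 2 * (n:ℝ) = -(x + y + 2 * ((-n : ℤ):ℝ)) by push_cast; ring,
      show -x + y + 2 * (n:ℝ) = -(x - y + 2 * ((-n : ℤ):ℝ)) by push_cast; ring,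
      Q_neg, Q_neg]
  rw [K, K]
  simp_rw [h1]
  exact ((Equiv.neg ℤ).tsum_eq
    (fun n : ℤ => Q t (x + y + 2 * (n:ℝ)) + Q t (x - y + 2 * (n:ℝ)))).trans
    (tsum_congr fun n => add_comm _ _)

lemma measurable_Q_comp {t : ℝ} {f : ℝ → ℝ} (hf : Measurable f) :
    Measurable fun z => Q t (f z) :=
  ENNReal.measurable_ofReal.comp ((continuous_gaussD t).measurable.comp hf)

lemma measurable_K_left (t y : ℝ) : Measurable fun z => K t z y := by
  apply Measurable.ennreal_tsum
  intro n
  exact (measurable_Q_comp (by fun_prop)).add (measurable_Q_comp (by fun_prop))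

lemma measurable_K_right (s x : ℝ) : Measurable fun z => K s x z := by
  apply Measurable.ennreal_tsum
  intro n
  exact (measurable_Q_comp (by fun_prop)).add (measurable_Q_comp (by fun_prop))

lemma integral_gaussD {t : ℝ} (ht : 0 < t) : ∫ w : ℝ, gaussD t w = 1 := by
  have h : ∀ w : ℝ, -w^2/(2*t) = -(1/(2*t)) * w^2 := fun w => by field_simp
  have h1 : (∫ w : ℝ, Real.exp (-w^2/(2*t))) = Real.sqrt (2*Real.pi*t) := by
    simp_rw [h]
    rw [integral_gaussian]
    congr 1
    field_simp
  unfold gaussD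
  rw [MeasureTheory.integral_const_mul, h1, Real.sqrt_eq_rpow,
    ← Real.rpow_add (by positivity)]
  norm_num

lemma integrable_gaussD {t : ℝ} (ht : 0 < t) : Integrable (gaussD t) := by
  have h : gaussD t = fun w => (2*Real.pi*t) ^ (-(1:ℝ)/2) * Real.exp (-(1/(2*t)) * w^2) := by
    funext w
    rw [gaussD]
    congr 1
    field_simp
  rw [h]
  exact (integrable_exp_neg_mul_sq (by positivity)).const_mul _

lemma gaussD_mul {s t : ℝ} (hs : 0 < s) (ht : 0 < t) (a c w : ℝ) :
    gaussD s (a - w) * gaussD t (w - c) =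
      gaussD (s+t) (a - c) * gaussD (s*t/(s+t)) (w - (t*a+s*c)/(s+t)) := by
  have hst : 0 < s + t := by linarith
  unfold gaussD
  rw [mul_mul_mul_comm, ← Real.exp_add, mul_mul_mul_comm, ← Real.exp_add,
    ← Real.mul_rpow (by positivity) (by positivity),
    ← Real.mul_rpow (by positivity) (by positivity)]
  congr 1
  · congr 1
    field_simp
  · congr 1
    field_simp
    ring

lemma conv_gaussD {s t : ℝ} (hs : 0 < s) (ht : 0 < t) (a c : ℝ) :
    ∫ w : ℝ, gaussD s (a - w) * gaussD t (w - c) = gaussD (s+t) (a - c) := by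
  have hst : 0 < s + t := by linarith
  have hv : 0 < s*t/(s+t) := by positivity
  simp_rw [gaussD_mul hs ht a c]
  rw [MeasureTheory.integral_const_mul,
    integral_sub_right_eq_self (gaussD (s*t/(s+t))) ((t*a+s*c)/(s+t)),
    integral_gaussD hv, mul_one]

lemma integrable_gaussD_mul {s t : ℝ} (hs : 0 < s) (ht : 0 < t) (a c : ℝ) :
    Integrable fun w => gaussD s (a - w) * gaussD t (w - c) := by
  have hst : 0 < s + t := by linarith
  have hv : 0 < s*t/(s+t) := by positivity
  simp_rw [gaussD_mul hs ht a c]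
  exact ((integrable_gaussD hv).comp_sub_right _).const_mul _

lemma conv_Q {s t : ℝ} (hs : 0 < s) (ht : 0 < t) (a c : ℝ) :
    ∫⁻ w : ℝ, Q s (a - w) * Q t (w - c) = Q (s+t) (a - c) := by
  have h : ∀ w : ℝ, Q s (a - w) * Q t (w - c)
      = ENNReal.ofReal (gaussD s (a - w) * gaussD t (w - c)) := fun w =>
    (ENNReal.ofReal_mul (gaussD_nonneg hs _)).symm
  simp_rw [h]
  rw [← MeasureTheory.ofReal_integral_eq_lintegral_ofReal (integrable_gaussD_mul hs ht a c)
    (Filter.Eventually.of_forall fun w => mul_nonneg (gaussD_nonneg hs _) (gaussD_nonneg ht _)),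
    conv_gaussD hs ht, Q]

lemma lintegral_G {s t : ℝ} (hs : 0 < s) (ht : 0 < t) (x y : ℝ) :
    ∫⁻ w : ℝ, Q s (x - w) * K t w y = K (s+t) x y := by
  have h1 : ∀ w : ℝ, Q s (x - w) * K t w y
      = ∑' m : ℤ, (Q s (x - w) * Q t (w - (y - 2*(m:ℝ)))
          + Q s (x - w) * Q t (w - (-y - 2*(m:ℝ)))) := by
    intro w
    rw [K, ← ENNReal.tsum_mul_left]
    refine tsum_congr fun m => ?_
    rw [show w - y + 2*(m:ℝ) = w - (y - 2*(m:ℝ)) from by ring,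
      show w + y + 2*(m:ℝ) = w - (-y - 2*(m:ℝ)) from by ring, mul_add]
  simp_rw [h1]
  rw [lintegral_tsum (f := fun (m : ℤ) (w : ℝ) => Q s (x - w) * Q t (w - (y - 2*(m:ℝ)))
      + Q s (x - w) * Q t (w - (-y - 2*(m:ℝ)))) (fun m => (((measurable_Q_comp (by fun_prop)).mul
    (measurable_Q_comp (by fun_prop))).add ((measurable_Q_comp (by fun_prop)).mul
    (measurable_Q_comp (by fun_prop)))).aemeasurable), K]
  refine tsum_congr fun m => ?_
  rw [lintegral_add_left (f := fun w => Q s (x - w) * Q t (w - (y - 2*(m:ℝ))))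
    ((measurable_Q_comp (by fun_prop)).mul
    (measurable_Q_comp (by fun_prop))), conv_Q hs ht, conv_Q hs ht,
    show x - (y - 2*(m:ℝ)) = x - y + 2*(m:ℝ) from by ring,
    show x - (-y - 2*(m:ℝ)) = x + y + 2*(m:ℝ) from by ring]

lemma setLIntegral_shift (f : ℝ → ℝ≥0∞) (c : ℝ) (A : Set ℝ) :
    ∫⁻ z in A, f z = ∫⁻ w in (fun w => w + c) ⁻¹' A, f (w + c) :=
  ((measurePreserving_add_right volume c).setLIntegral_comp_preimage_emb
    (MeasurableEquiv.addRight c).measurableEmbedding f A).symm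

lemma setLIntegral_neg (f : ℝ → ℝ≥0∞) (A : Set ℝ) :
    ∫⁻ z in A, f z = ∫⁻ w in (fun w : ℝ => -w) ⁻¹' A, f (-w) :=
  ((Measure.measurePreserving_neg volume).setLIntegral_comp_preimage_emb
    (MeasurableEquiv.neg ℝ).measurableEmbedding f A).symm

lemma claim1 {s t : ℝ} (x y : ℝ) (n : ℤ) :
    ∫⁻ z in Set.Ioc (0:ℝ) 1, Q s (x - z + 2*(n:ℝ)) * K t z y
      = ∫⁻ w in Set.Ioc (-2*(n:ℝ)-1+1) (-2*(n:ℝ)+1), Q s (x - w) * K t w y := by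
  rw [setLIntegral_shift (fun z => Q s (x - z + 2*(n:ℝ)) * K t z y) (2*(n:ℝ)),
    Set.preimage_add_const_Ioc,
    show (0:ℝ) - 2*(n:ℝ) = -2*(n:ℝ)-1+1 from by ring,
    show (1:ℝ) - 2*(n:ℝ) = -2*(n:ℝ)+1 from by ring]
  refine lintegral_congr fun w => ?_
  rw [K_shift t w y n]
  congr 2
  ring

lemma claim2 {s t : ℝ} (x y : ℝ) (n : ℤ) :
    ∫⁻ z in Set.Ioc (0:ℝ) 1, Q s (x + z + 2*(n:ℝ)) * K t z y
      = ∫⁻ w in Set.Ioc (-2*(n:ℝ)-1) (-2*(n:ℝ)-1+1), Q s (x - w) * K t w y := by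
  rw [setLIntegral_neg (fun z => Q s (x + z + 2*(n:ℝ)) * K t z y) _,
    show (fun w : ℝ => -w) ⁻¹' Set.Ioc 0 1 = Set.Ico (-1) 0 from by
      ext w
      simp only [Set.mem_preimage, Set.mem_Ioc, Set.mem_Ico]
      constructor <;> rintro ⟨h1, h2⟩ <;> constructor <;> linarith,
    setLIntegral_congr (Ico_ae_eq_Ioc (μ := volume) (a := (-1:ℝ)) (b := 0)),
    setLIntegral_shift (fun z => Q s (x + -z + 2*(n:ℝ)) * K t (-z) y) (2*(n:ℝ)),
    Set.preimage_add_const_Ioc,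
    show (-1:ℝ) - 2*(n:ℝ) = -2*(n:ℝ)-1 from by ring,
    show (0:ℝ) - 2*(n:ℝ) = -2*(n:ℝ)-1+1 from by ring]
  refine lintegral_congr fun w => ?_
  rw [show -(w + 2*(n:ℝ)) = -w + 2*((-n : ℤ):ℝ) from by push_cast; ring,
    K_shift t (-w) y (-n), K_even t w y]
  congr 2
  push_cast
  ring

lemma iUnion_T : (⋃ n : ℤ, Set.Ioc (-2*(n:ℝ)-1) (-2*(n:ℝ)+1)) = Set.univ := by
  ext w
  simp only [Set.mem_iUnion, Set.mem_Ioc, Set.mem_univ, iff_true]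
  refine ⟨-⌈(w-1)/2⌉, ?_, ?_⟩
  · have h2 : ((⌈(w-1)/2⌉ : ℤ):ℝ) < (w-1)/2 + 1 := Int.ceil_lt_add_one _
    push_cast
    linarith
  · have h1 : (w-1)/2 ≤ ((⌈(w-1)/2⌉ : ℤ):ℝ) := Int.le_ceil _
    push_cast
    linarith

lemma pairwise_T :
    Pairwise (Function.onFun Disjoint fun n : ℤ => Set.Ioc (-2*(n:ℝ)-1) (-2*(n:ℝ)+1)) := by
  have main : ∀ n m : ℤ, n < m →
      Disjoint (Set.Ioc (-2*(n:ℝ)-1) (-2*(n:ℝ)+1)) (Set.Ioc (-2*(m:ℝ)-1) (-2*(m:ℝ)+1)) := by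
    intro n m h
    rw [Set.Ioc_disjoint_Ioc]
    have : (n:ℝ) + 1 ≤ m := by exact_mod_cast h
    calc min (-2*(n:ℝ)+1) (-2*(m:ℝ)+1) ≤ -2*(m:ℝ)+1 := min_le_right _ _
      _ ≤ -2*(n:ℝ)-1 := by linarith
      _ ≤ max (-2*(n:ℝ)-1) (-2*(m:ℝ)-1) := le_max_left _ _
  intro n m hnm
  rcases lt_or_gt_of_ne hnm with h | h
  · exact main n m h
  · exact (main m n h).symm

lemma key_lintegral {s t : ℝ} (hs : 0 < s) (ht : 0 < t) (x y : ℝ) :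
    ∫⁻ z in Set.Ioc (0:ℝ) 1, K s x z * K t z y = K (s+t) x y := by
  have hmul : ∀ z : ℝ, K s x z * K t z y
      = ∑' n : ℤ, (Q s (x - z + 2*(n:ℝ)) * K t z y + Q s (x + z + 2*(n:ℝ)) * K t z y) := by
    intro z
    rw [show K s x z = ∑' n : ℤ, (Q s (x - z + 2*(n:ℝ)) + Q s (x + z + 2*(n:ℝ))) from rfl,
      ← ENNReal.tsum_mul_right]
    exact tsum_congr fun n => add_mul _ _ _
  have hmeas1 : ∀ n : ℤ, Measurable fun z => Q s (x - z + 2*(n:ℝ)) * K t z y := fun n =>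
    (measurable_Q_comp (by fun_prop)).mul (measurable_K_left t y)
  have hmeas2 : ∀ n : ℤ, Measurable fun z => Q s (x + z + 2*(n:ℝ)) * K t z y := fun n =>
    (measurable_Q_comp (by fun_prop)).mul (measurable_K_left t y)
  simp_rw [hmul]
  rw [lintegral_tsum (f := fun (n : ℤ) (z : ℝ) => Q s (x - z + 2*(n:ℝ)) * K t z y
      + Q s (x + z + 2*(n:ℝ)) * K t z y) (fun n => ((hmeas1 n).add (hmeas2 n)).aemeasurable)]
  have hn : ∀ n : ℤ,
      ∫⁻ z in Set.Ioc (0:ℝ) 1, (Q s (x - z + 2*(n:ℝ)) * K t z y + Q s (x + z + 2*(n:ℝ)) * K t z y)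
        = ∫⁻ w in Set.Ioc (-2*(n:ℝ)-1) (-2*(n:ℝ)+1), Q s (x - w) * K t w y := by
    intro n
    rw [lintegral_add_left (hmeas1 n), claim1 x y n, claim2 x y n, add_comm,
      ← lintegral_union measurableSet_Ioc (Set.Ioc_disjoint_Ioc_of_le le_rfl),
      Set.Ioc_union_Ioc_eq_Ioc (by linarith) (by linarith)]
  simp_rw [hn]
  rw [← lintegral_iUnion (fun n => measurableSet_Ioc) pairwise_T, iUnion_T,
    Measure.restrict_univ, lintegral_G hs ht x y]

/-- Chapman–Kolmogorov equation for the Neumann heat kernel. -/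
theorem heatK_chapman_kolmogorov :
    ∀ s > (0:ℝ), ∀ t > (0:ℝ), ∀ x ∈ Set.Icc (0:ℝ) 1, ∀ y ∈ Set.Icc (0:ℝ) 1,
      ∫ z in (0:ℝ)..1, heatK s x z * heatK t z y = heatK (s + t) x y := by
  intro s hs t ht x _ y _
  have hst : 0 < s + t := by linarith
  have hofReal : ∀ z : ℝ, ENNReal.ofReal (heatK s x z * heatK t z y) = K s x z * K t z y :=
    fun z => by
      rw [ENNReal.ofReal_mul (heatK_nonneg hs x z), ofReal_heatK hs, ofReal_heatK ht]
  have hfun : ∀ z : ℝ, heatK s x z * heatK t z y = (K s x z * K t z y).toReal := fun z => by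
    rw [← hofReal z,
      ENNReal.toReal_ofReal (mul_nonneg (heatK_nonneg hs x z) (heatK_nonneg ht z y))]
  have hmeas : AEStronglyMeasurable (fun z => heatK s x z * heatK t z y)
      (volume.restrict (Set.Ioc (0:ℝ) 1)) := by
    have h : (fun z : ℝ => heatK s x z * heatK t z y)
        = fun z => (K s x z * K t z y).toReal := funext hfun
    rw [h]
    exact (((measurable_K_right s x).mul (measurable_K_left t y)).ennreal_toReal).aestronglyMeasurable
  rw [intervalIntegral.integral_of_le (by norm_num),
    MeasureTheory.integral_eq_lintegral_of_nonneg_ae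
      (Filter.Eventually.of_forall fun z => mul_nonneg (heatK_nonneg hs x z) (heatK_nonneg ht z y))
      hmeas,
    lintegral_congr hofReal, key_lintegral hs ht x y, ← ofReal_heatK hst,
    ENNReal.toReal_ofReal (heatK_nonneg hst x y)]
end

section
/- There exists a constant C > 0 such that for every t ∈ (0,1] and all x, y ∈ [0,1], p(t,x,y) ≤ C t^{-1/2} exp(−(x−y)²/(4t)) (Gaussian upper bound for the Neumann heat kernel). -/
open MeasureTheory Real

lemma csumm : Summable (fun n : ℤ => Real.exp (1/2 - (n:ℝ)^2/4)) := by
  have hnat : Summable (fun n : ℕ => Real.exp (1/2 - (n:ℝ)^2/4)) := by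
    have hg : Summable (fun n : ℕ => Real.exp (1/2) * Real.exp (-(1:ℝ)/4) ^ n) :=
      (summable_geometric_of_lt_one (le_of_lt (Real.exp_pos _))
        (by { rw [Real.exp_lt_one_iff]; norm_num })).mul_left _
    refine Summable.of_nonneg_of_le (fun n => (Real.exp_pos _).le) (fun n => ?_) hg
    rw [← Real.exp_nat_mul, ← Real.exp_add]
    apply Real.exp_le_exp.mpr
    have : (n:ℝ) ≤ (n:ℝ)^2 := by
      exact_mod_cast Nat.cast_le.mpr (Nat.le_self_pow two_ne_zero n)
    nlinarith
  apply Summable.of_nat_of_neg <;> simpa using hnat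

lemma sq_lower (x y : ℝ) (hx : x ∈ Set.Icc (0:ℝ) 1) (hy : y ∈ Set.Icc (0:ℝ) 1) (n : ℤ) :
    (x - y + 2 * (n:ℝ))^2 ≥ (x-y)^2/2 + max ((n:ℝ)^2 - 2) 0 / 2 ∧
    (x + y + 2 * (n:ℝ))^2 ≥ (x-y)^2/2 + max ((n:ℝ)^2 - 2) 0 / 2 := by
  obtain ⟨hx0, hx1⟩ := hx
  obtain ⟨hy0, hy1⟩ := hy
  rcases le_or_gt 2 |n| with h | h
  · have hm : (4:ℝ) ≤ (n:ℝ)^2 := by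
      have : (2:ℝ) ≤ |(n:ℝ)| := by exact_mod_cast (by simpa using h : (2:ℤ) ≤ |n|)
      nlinarith [abs_nonneg ((n:ℝ)), sq_abs ((n:ℝ))]
    have hmax : max ((n:ℝ)^2 - 2) 0 = (n:ℝ)^2 - 2 := max_eq_left (by nlinarith)
    rw [hmax]
    constructor
    · nlinarith [sq_nonneg ((x-y) + (n:ℝ)), sq_nonneg ((x-y) - (n:ℝ)), sq_nonneg (x-y)]
    · nlinarith [sq_nonneg ((x+y) + (n:ℝ)), sq_nonneg ((x+y) - (n:ℝ)), sq_nonneg (x-y),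
        sq_nonneg (x+y)]
  · obtain ⟨hl, hr⟩ := abs_lt.mp h
    interval_cases n <;>
    · simp only [Int.cast_neg, Int.cast_one, Int.cast_zero]
      constructor <;> [skip; skip] <;>
      · rw [show max _ (0:ℝ) = 0 from max_eq_right (by norm_num)]
        nlinarith [sq_nonneg (x-y), sq_nonneg (x+y), mul_nonneg hx0 hy0,
          mul_nonneg (by linarith : (0:ℝ) ≤ 1 - x) (by linarith : (0:ℝ) ≤ 1 - y)]

lemma gaussD_le (t u x y : ℝ) (ht : 0 < t) (ht1 : t ≤ 1) (hx : x ∈ Set.Icc (0:ℝ) 1)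
    (hy : y ∈ Set.Icc (0:ℝ) 1) (n : ℤ)
    (hu : u^2 ≥ (x-y)^2/2 + max ((n:ℝ)^2 - 2) 0 / 2) :
    gaussD t u ≤ t ^ (-(1:ℝ)/2) * (Real.exp (-(x - y) ^ 2 / (4 * t)) *
      Real.exp (1/2 - (n:ℝ)^2/4)) := by
  unfold gaussD
  have h1 : (2 * Real.pi * t) ^ (-(1:ℝ)/2) ≤ t ^ (-(1:ℝ)/2) := by
    apply Real.rpow_le_rpow_of_nonpos ht
    · nlinarith [Real.pi_gt_three]
    · norm_num
  have h2 : Real.exp (-u ^ 2 / (2 * t)) ≤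
      Real.exp (-(x - y) ^ 2 / (4 * t)) * Real.exp (1/2 - (n:ℝ)^2/4) := by
    rw [← Real.exp_add]
    apply Real.exp_le_exp.mpr
    have hM0 : (0:ℝ) ≤ max ((n:ℝ)^2 - 2) 0 := le_max_right _ _
    have hM1 : (n:ℝ)^2 - 2 ≤ max ((n:ℝ)^2 - 2) 0 := le_max_left _ _
    have hinv : max ((n:ℝ)^2 - 2) 0 / 4 ≤ max ((n:ℝ)^2 - 2) 0 / (4*t) := by
      apply div_le_div_of_nonneg_left hM0 (by linarith) (by linarith)
    have key : (x-y)^2 / (4*t) + max ((n:ℝ)^2 - 2) 0 / (4*t) ≤ u^2 / (2*t) := by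
      rw [← add_div, div_le_div_iff₀ (by linarith) (by linarith)]
      nlinarith
    rw [neg_div, neg_div]
    linarith
  calc (2 * Real.pi * t) ^ (-(1:ℝ)/2) * Real.exp (-u ^ 2 / (2 * t))
      ≤ t ^ (-(1:ℝ)/2) * (Real.exp (-(x - y) ^ 2 / (4 * t)) * Real.exp (1/2 - (n:ℝ)^2/4)) := by
        apply mul_le_mul h1 h2 (Real.exp_pos _).le (Real.rpow_nonneg ht.le _)

/-- Gaussian upper bound for the Neumann heat kernel. -/
theorem heatK_gaussian_upper_bound :
    ∃ C > (0:ℝ), ∀ t ∈ Set.Ioc (0:ℝ) 1, ∀ x ∈ Set.Icc (0:ℝ) 1, ∀ y ∈ Set.Icc (0:ℝ) 1,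
      heatK t x y ≤ C * t ^ (-(1:ℝ)/2) * Real.exp (-(x - y) ^ 2 / (4 * t)) := by
  set S := ∑' n : ℤ, Real.exp (1/2 - (n:ℝ)^2/4) with hS
  have hSpos : 0 < S := Summable.tsum_pos csumm (fun n => (Real.exp_pos _).le) 0 (Real.exp_pos _)
  refine ⟨2 * S, by linarith, ?_⟩
  rintro t ⟨ht, ht1⟩ x hx y hy
  set K := t ^ (-(1:ℝ)/2) * Real.exp (-(x - y) ^ 2 / (4 * t)) with hK
  have hterm : ∀ n : ℤ,
      gaussD t (x - y + 2 * (n : ℝ)) + gaussD t (x + y + 2 * (n : ℝ)) ≤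
        K * (2 * Real.exp (1/2 - (n:ℝ)^2/4)) := by
    intro n
    obtain ⟨h1, h2⟩ := sq_lower x y hx hy n
    have b1 := gaussD_le t (x - y + 2 * (n:ℝ)) x y ht ht1 hx hy n h1
    have b2 := gaussD_le t (x + y + 2 * (n:ℝ)) x y ht ht1 hx hy n h2
    rw [hK]; ring_nf; ring_nf at b1 b2; linarith
  have hgnn : ∀ n : ℤ, 0 ≤ gaussD t (x - y + 2 * (n : ℝ)) + gaussD t (x + y + 2 * (n : ℝ)) := by
    intro n
    have : ∀ u : ℝ, 0 ≤ gaussD t u := fun u =>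
      mul_nonneg (Real.rpow_nonneg (by positivity) _) (Real.exp_pos _).le
    linarith [this (x - y + 2 * (n:ℝ)), this (x + y + 2 * (n:ℝ))]
  have hgsumm : Summable (fun n : ℤ => K * (2 * Real.exp (1/2 - (n:ℝ)^2/4))) :=
    (csumm.mul_left 2).mul_left K
  have hfsumm : Summable (fun n : ℤ =>
      gaussD t (x - y + 2 * (n : ℝ)) + gaussD t (x + y + 2 * (n : ℝ))) :=
    Summable.of_nonneg_of_le hgnn hterm hgsumm
  have hle : heatK t x y ≤ ∑' n : ℤ, K * (2 * Real.exp (1/2 - (n:ℝ)^2/4)) :=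
    Summable.tsum_le_tsum hterm hfsumm hgsumm
  have heq : ∑' n : ℤ, K * (2 * Real.exp (1/2 - (n:ℝ)^2/4)) = K * (2 * S) := by
    rw [tsum_mul_left, tsum_mul_left]
  rw [heq] at hle
  calc heatK t x y ≤ K * (2 * S) := hle
    _ = 2 * S * t ^ (-(1:ℝ)/2) * Real.exp (-(x - y) ^ 2 / (4 * t)) := by rw [hK]; ring
end
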